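/- Let α ∈ [0,1) and let h : ℝ^m → ℝ^n satisfy the robust-normalization conditions with constant α. Then for every sequence (F̂_t)_{t∈ℕ} of row-stochastic matrices in ℝ^{m×n} and every initial reward R̂_0 ≤ 0, the iteration R̂_{t+1} := R̂_t + (γF̂_t − S) h(R̂_t) satisfies ‖h(R̂_t)‖_∞ ≤ (α^t/(1 − γ)) ‖h_max(R̂_0)‖_∞ for every t ∈ ℕ; in particular the input sequence decays geometrically. -/

import Mathlib

open Matrix MeasureTheory Filter Topology

noncomputable section

/-- The policy matrix `Π` of a deterministic policy `π`. -/
def polMat {n m : ℕ} (π : Fin n → Fin m) : Matrix (Fin n) (Fin m) ℝ :=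
  Matrix.of fun i j => if j = π i then 1 else 0

/-- The matrix `S` with `S^j_i = 1` iff `s j = i`. -/
def projMat {n m : ℕ} (s : Fin m → Fin n) : Matrix (Fin m) (Fin n) ℝ :=
  Matrix.of fun j i => if s j = i then 1 else 0

/-- A row-stochastic matrix: nonnegative entries, rows summing to one. -/
def RowStochastic {n m : ℕ} (F : Matrix (Fin m) (Fin n) ℝ) : Prop :=
  (∀ j i, 0 ≤ F j i) ∧ ∀ j, ∑ i, F j i = 1

/-- A deterministic policy: a section of the state projection `s`. -/
def IsPolicy {n m : ℕ} (s : Fin m → Fin n) (π : Fin n → Fin m) : Prop :=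
  ∀ i, s (π i) = i

/-- The value vector `V_{π,R} = (I − γΠF)⁻¹ Π R`. -/
def valueVec {n m : ℕ} (γ : ℝ) (F : Matrix (Fin m) (Fin n) ℝ)
    (π : Fin n → Fin m) (R : Fin m → ℝ) : Fin n → ℝ :=
  ((1 : Matrix (Fin n) (Fin n) ℝ) - γ • (polMat π * F))⁻¹ *ᵥ (polMat π *ᵥ R)

/-- A policy is optimal for `R` when its value vector dominates all others componentwise. -/
def IsOptimal {n m : ℕ} (s : Fin m → Fin n) (γ : ℝ) (F : Matrix (Fin m) (Fin n) ℝ)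
    (R : Fin m → ℝ) (π : Fin n → Fin m) : Prop :=
  IsPolicy s π ∧ ∀ π', IsPolicy s π' → ∀ i, valueVec γ F π' R i ≤ valueVec γ F π R i

/-- `hmax R i = max_{j ∈ U_i} R j`. -/
def hmax {n m : ℕ} (s : Fin m → Fin n) (R : Fin m → ℝ) (i : Fin n) : ℝ :=
  sSup {x | ∃ j, s j = i ∧ R j = x}


/-- The model-invariant admissible set `I(R)`. -/
def Iset {n m : ℕ} (s : Fin m → Fin n) (γ : ℝ) (R : Fin m → ℝ) : Set (Fin n → ℝ) :=
  {Δ | Δ ≤ 0 ∧ ∀ i k : Fin n, ∀ j : Fin m, s j = i → γ * Δ k + R j ≤ Δ i}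

/-- The robust-normalization conditions with constant `α`:
(i) `h(R) ∈ I(R)` and (ii) `h(R)^i + γ‖h(R)‖_∞ ≤ h_max(R)^i + α‖h_max(R)‖_∞`. -/
def RobustNormalizing {n m : ℕ} (s : Fin m → Fin n) (γ α : ℝ)
    (h : (Fin m → ℝ) → (Fin n → ℝ)) : Prop :=
  ∀ R : Fin m → ℝ, R ≤ 0 →
    h R ∈ Iset s γ R ∧ ∀ i, h R i + γ * ‖h R‖ ≤ hmax s R i + α * ‖hmax s R‖

lemma hmaxSet_eq {n m : ℕ} (s : Fin m → Fin n) (R : Fin m → ℝ) (i : Fin n) :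
    {x | ∃ j, s j = i ∧ R j = x} = R '' {j | s j = i} := by
  ext x; simp [Set.mem_image, eq_comm]

lemma hmaxSet_finite {n m : ℕ} (s : Fin m → Fin n) (R : Fin m → ℝ) (i : Fin n) :
    {x | ∃ j, s j = i ∧ R j = x}.Finite := by
  rw [hmaxSet_eq]; exact (Set.toFinite _).image _

lemma hmax_mem {n m : ℕ} (s : Fin m → Fin n) (hs : Function.Surjective s)
    (R : Fin m → ℝ) (i : Fin n) : ∃ j, s j = i ∧ R j = hmax s R i := by
  have hne : {x | ∃ j, s j = i ∧ R j = x}.Nonempty := by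
    obtain ⟨j, hj⟩ := hs i; exact ⟨R j, j, hj, rfl⟩
  exact hne.csSup_mem (hmaxSet_finite s R i)

lemma le_hmax {n m : ℕ} (s : Fin m → Fin n) (R : Fin m → ℝ) (j : Fin m) :
    R j ≤ hmax s R (s j) :=
  le_csSup (hmaxSet_finite s R (s j)).bddAbove ⟨j, rfl, rfl⟩

lemma hmax_le {n m : ℕ} (s : Fin m → Fin n) (hs : Function.Surjective s)
    (R : Fin m → ℝ) (i : Fin n) {c : ℝ} (hc : ∀ j, s j = i → R j ≤ c) :
    hmax s R i ≤ c := by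
  have hne : {x | ∃ j, s j = i ∧ R j = x}.Nonempty := by
    obtain ⟨j, hj⟩ := hs i; exact ⟨R j, j, hj, rfl⟩
  exact csSup_le hne (by rintro x ⟨j, hj, rfl⟩; exact hc j hj)

lemma neg_norm_le_apply {n : ℕ} (v : Fin n → ℝ) (i : Fin n) : -‖v‖ ≤ v i := by
  have := norm_le_pi_norm v i
  rw [Real.norm_eq_abs] at this
  cases abs_le.mp this with | intro a b => exact a

lemma norm_le_of_nonpos {n : ℕ} {v : Fin n → ℝ} (hv : v ≤ 0) {c : ℝ} (hc : 0 ≤ c)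
    (hlb : ∀ i, -c ≤ v i) : ‖v‖ ≤ c := by
  rw [pi_norm_le_iff_of_nonneg hc]
  intro i
  rw [Real.norm_eq_abs, abs_le]
  exact ⟨hlb i, le_trans (hv i) hc⟩

lemma exists_eq_neg_norm {n : ℕ} (hn : 1 ≤ n) {v : Fin n → ℝ} (hv : v ≤ 0) :
    ∃ i, v i = -‖v‖ := by
  have hne : (Finset.univ : Finset (Fin n)).Nonempty := ⟨⟨0, hn⟩, Finset.mem_univ _⟩
  obtain ⟨i, -, hi⟩ := Finset.exists_min_image Finset.univ v hne
  refine ⟨i, ?_⟩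
  have h0 : v i ≤ 0 := hv i
  have h1 : ‖v‖ ≤ -v i :=
    norm_le_of_nonpos hv (by linarith) (fun k => by
      have := hi k (Finset.mem_univ k); linarith)
  have h2 : -v i ≤ ‖v‖ := by
    have := norm_le_pi_norm v i
    rw [Real.norm_eq_abs, abs_of_nonpos h0] at this
    exact this
  linarith

lemma step_apply {n m : ℕ} (s : Fin m → Fin n) (γ : ℝ) (F : Matrix (Fin m) (Fin n) ℝ)
    (v : Fin n → ℝ) (j : Fin m) :
    ((γ • F - projMat s) *ᵥ v) j = γ * ∑ i, F j i * v i - v (s j) := by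
  simp [mulVec, dotProduct, projMat, sub_mul, Finset.sum_sub_distrib, Finset.mul_sum,
    ite_mul, mul_assoc]

/-- Under the robust-normalization conditions, along the stochastic
iteration `R̂_{t+1} = R̂_t + (γF̂_t − S)h(R̂_t)` the input decays geometrically:
`‖h(R̂_t)‖_∞ ≤ (α^t/(1−γ))‖h_max(R̂₀)‖_∞`. -/
theorem robust_input_geometric_decay {n m : ℕ} (hn : 1 ≤ n) (hm : 1 ≤ m)
    (s : Fin m → Fin n) (hs : Function.Surjective s)
    (γ : ℝ) (hγ0 : 0 ≤ γ) (hγ1 : γ < 1)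
    (α : ℝ) (hα0 : 0 ≤ α) (hα1 : α < 1)
    (h : (Fin m → ℝ) → (Fin n → ℝ)) (hrob : RobustNormalizing s γ α h)
    (Fhat : ℕ → Matrix (Fin m) (Fin n) ℝ) (hFhat : ∀ t, RowStochastic (Fhat t))
    (Rhat : ℕ → Fin m → ℝ) (hR0 : Rhat 0 ≤ 0)
    (hstep : ∀ t, Rhat (t + 1) = Rhat t + (γ • Fhat t - projMat s) *ᵥ h (Rhat t)) :
    ∀ t, ‖h (Rhat t)‖ ≤ α ^ t / (1 - γ) * ‖hmax s (Rhat 0)‖ := by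
  have key : ∀ t, Rhat t ≤ 0 ∧ ‖hmax s (Rhat t)‖ ≤ α ^ t * ‖hmax s (Rhat 0)‖ := by
    intro t
    induction t with
    | zero => exact ⟨hR0, by simp⟩
    | succ t ih =>
      obtain ⟨hRt, hnorm⟩ := ih
      obtain ⟨⟨hv0, hvI⟩, hii⟩ := hrob (Rhat t) hRt
      set v := h (Rhat t) with hvdef
      have hFnn := (hFhat t).1
      have hFrow := (hFhat t).2
      have hsum_ub : ∀ j, ∑ i, Fhat t j i * v i ≤ 0 := fun j =>
        Finset.sum_nonpos fun i _ => mul_nonpos_of_nonneg_of_nonpos (hFnn j i) (hv0 i)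
      have hsum_lb : ∀ j, -‖v‖ ≤ ∑ i, Fhat t j i * v i := by
        intro j
        calc -‖v‖ = ∑ i, Fhat t j i * (-‖v‖) := by
              rw [← Finset.sum_mul, hFrow j, one_mul]
          _ ≤ ∑ i, Fhat t j i * v i :=
              Finset.sum_le_sum fun i _ =>
                mul_le_mul_of_nonneg_left (neg_norm_le_apply v i) (hFnn j i)
      have happly : ∀ j, Rhat (t+1) j
          = Rhat t j + (γ * ∑ i, Fhat t j i * v i - v (s j)) := by
        intro j; rw [hstep t]; simp [step_apply]; rfl
      have key2 : ∀ j, γ * (∑ i, Fhat t j i * v i) + Rhat t j ≤ v (s j) := by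
        intro j
        have hterm : ∀ i, Fhat t j i * (γ * v i + Rhat t j) ≤ Fhat t j i * v (s j) :=
          fun i => mul_le_mul_of_nonneg_left (hvI (s j) i j rfl) (hFnn j i)
        have hsum := Finset.sum_le_sum (fun i (_ : i ∈ Finset.univ) => hterm i)
        have hL : ∑ i, Fhat t j i * (γ * v i + Rhat t j)
            = γ * (∑ i, Fhat t j i * v i) + Rhat t j := by
          have e : ∀ i, Fhat t j i * (γ * v i + Rhat t j)
              = γ * (Fhat t j i * v i) + Fhat t j i * Rhat t j := fun i => by ring
          rw [Finset.sum_congr rfl (fun i _ => e i), Finset.sum_add_distrib,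
            ← Finset.mul_sum, ← Finset.sum_mul, hFrow j, one_mul]
        have hR : ∑ i, Fhat t j i * v (s j) = v (s j) := by
          rw [← Finset.sum_mul, hFrow j, one_mul]
        rw [hL, hR] at hsum
        exact hsum
      have hRt1 : Rhat (t+1) ≤ 0 := by
        intro j
        have := key2 j
        have h2 := happly j
        simp only [Pi.zero_apply]
        linarith
      have hmax1_nonpos : ∀ i, hmax s (Rhat (t+1)) i ≤ 0 := fun i =>
        hmax_le s hs _ i (fun j _ => hRt1 j)
      have hmax1_lb : ∀ i, -(α * ‖hmax s (Rhat t)‖) ≤ hmax s (Rhat (t+1)) i := by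
        intro i
        obtain ⟨j, hj, hjmax⟩ := hmax_mem s hs (Rhat t) i
        have hle : Rhat (t+1) j ≤ hmax s (Rhat (t+1)) i := by
          have := le_hmax s (Rhat (t+1)) j
          rwa [hj] at this
        have h2 := happly j
        have h3 : γ * (-‖v‖) ≤ γ * ∑ i, Fhat t j i * v i :=
          mul_le_mul_of_nonneg_left (hsum_lb j) hγ0
        have h4 := hii i
        rw [hj] at h2
        -- Rhat(t+1) j = hmax i + γ∑ − v i ≥ hmax i − γ‖v‖ − v i ≥ −α‖hmax‖
        have : -(α * ‖hmax s (Rhat t)‖) ≤ Rhat (t+1) j := by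
          rw [h2, hjmax]
          linarith
        linarith
      have hstep_norm : ‖hmax s (Rhat (t+1))‖ ≤ α * ‖hmax s (Rhat t)‖ := by
        refine norm_le_of_nonpos (fun i => ?_) (by positivity) hmax1_lb
        simpa using hmax1_nonpos i
      refine ⟨hRt1, ?_⟩
      calc ‖hmax s (Rhat (t+1))‖ ≤ α * ‖hmax s (Rhat t)‖ := hstep_norm
        _ ≤ α * (α ^ t * ‖hmax s (Rhat 0)‖) := by
            exact mul_le_mul_of_nonneg_left hnorm hα0
        _ = α ^ (t+1) * ‖hmax s (Rhat 0)‖ := by ring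
  intro t
  obtain ⟨hRt, hnorm⟩ := key t
  obtain ⟨⟨hv0, hvI⟩, hii⟩ := hrob (Rhat t) hRt
  set v := h (Rhat t) with hvdef
  obtain ⟨i, hi⟩ := exists_eq_neg_norm hn hv0
  obtain ⟨j, hj, hjmax⟩ := hmax_mem s hs (Rhat t) i
  have h1 : γ * v i + Rhat t j ≤ v i := hvI i i j hj
  have h2 : -‖hmax s (Rhat t)‖ ≤ hmax s (Rhat t) i := neg_norm_le_apply _ i
  have h3 : (1 - γ) * ‖v‖ ≤ ‖hmax s (Rhat t)‖ := by
    rw [← hjmax] at h2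
    nlinarith [norm_nonneg v]
  have hγ' : 0 < 1 - γ := by linarith
  rw [div_mul_eq_mul_div, le_div_iff₀ hγ']
  have h4 : (1 - γ) * ‖v‖ ≤ α ^ t * ‖hmax s (Rhat 0)‖ := le_trans h3 hnorm
  linarith
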